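/- arXiv:1704.01922 — 6 statements merged into one kernel-verified Lean document; each statement's English description precedes it below -/
import Mathlib

section
/- Let F be a family of finite simple graphs all of which are connected, and let G1 ⊆ G2 be graphs on a common finite vertex set. If the sandwich set SW_F(G1,G2) is non-empty, then it contains a graph G such that the vertex sets of the connected components of G coincide with the vertex sets of the connected components of G1; that is, for all vertices u and v, u and v are connected by a walk in G if and only if they are connected by a walk in G1. -/
open SimpleGraph

/-- `G` is `H`-free: no induced subgraph of `G` is isomorphic to `H`
(an induced copy is a graph embedding). -/
def InducedFree {α β : Type*} (H : SimpleGraph β) (G : SimpleGraph α) : Prop :=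
  ¬ Nonempty (H ↪g G)

/-- `G` belongs to the sandwich set `SW_F(G1, G2)`. -/
def InSandwich {V ι : Type*} {W : ι → Type*} (F : ∀ i, SimpleGraph (W i))
    (G1 G2 G : SimpleGraph V) : Prop :=
  G1 ≤ G ∧ G ≤ G2 ∧ ∀ i, InducedFree (F i) G

theorem sandwich_components {V ι : Type*} [Fintype V] {W : ι → Type*}
    [∀ i, Fintype (W i)] (F : ∀ i, SimpleGraph (W i))
    (hconn : ∀ i, (F i).Connected)
    (G1 G2 : SimpleGraph V) (h12 : G1 ≤ G2)
    (h : ∃ G, InSandwich F G1 G2 G) :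
    ∃ G, InSandwich F G1 G2 G ∧
      ∀ u v : V, G.Reachable u v ↔ G1.Reachable u v := by
  obtain ⟨G, hG1, hG2, hfree⟩ := h
  set G' : SimpleGraph V :=
    { Adj := fun u v => G.Adj u v ∧ G1.Reachable u v
      symm := ⟨fun u v ⟨h1, h2⟩ => ⟨h1.symm, h2.symm⟩⟩
      loopless := ⟨fun u ⟨h1, _⟩ => G.irrefl h1⟩ } with hG'
  have hadj : ∀ {u v}, G'.Adj u v ↔ G.Adj u v ∧ G1.Reachable u v := Iff.rfl
  have h1le : G1 ≤ G' := fun u v huv => ⟨hG1 huv, SimpleGraph.Adj.reachable huv⟩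
  have hreach : ∀ {u v}, G'.Reachable u v → G1.Reachable u v := by
    intro u v h
    obtain ⟨w⟩ := h
    induction w with
    | nil => exact SimpleGraph.Reachable.refl _
    | cons ha _ ih => exact (hadj.mp ha).2.trans ih
  refine ⟨G', ⟨h1le, fun u v huv => hG2 (hadj.mp huv).1, ?_⟩,
    fun u v => ⟨hreach, fun h => h.mono h1le⟩⟩
  intro i ⟨f⟩
  refine hfree i ⟨⟨f.toEmbedding, ?_⟩⟩
  intro a b
  constructor
  · intro hab
    have hr : G1.Reachable (f a) (f b) :=
      hreach (((hconn i).preconnected a b).map (SimpleGraph.Embedding.toHom f))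
    exact f.map_rel_iff.mp (hadj.mpr ⟨hab, hr⟩)
  · intro hab
    exact (hadj.mp (f.map_rel_iff.mpr hab)).1
end

section
/- Let F be a family of finite simple graphs none of which has a universal vertex, and let G1 ⊆ G2 be graphs on a common finite vertex set. If u is a universal vertex of G2, then the sandwich set SW_F(G1,G2) is non-empty if and only if SW_F(G1 − u, G2 − u) is non-empty, where G − u denotes the induced subgraph obtained by deleting the vertex u. -/
open SimpleGraph

/-- `x` is a universal vertex of `G`: adjacent to every other vertex. -/
def IsUniversal {α : Type*} (G : SimpleGraph α) (x : α) : Prop :=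
  ∀ y, y ≠ x → G.Adj x y

/-- Extend a graph on `V \ {u}` to `V` by making `u` universal. -/
def extendUniv {V : Type*} (u : V) (G' : SimpleGraph ({v : V | v ≠ u} : Set V)) :
    SimpleGraph V where
  Adj v w := (v = u ∧ w ≠ u) ∨ (w = u ∧ v ≠ u) ∨
    ∃ (hv : v ≠ u) (hw : w ≠ u), G'.Adj ⟨v, hv⟩ ⟨w, hw⟩
  symm := by
    constructor
    intro v w h
    rcases h with ⟨h1, h2⟩ | ⟨h1, h2⟩ | ⟨h1, h2, h3⟩
    · exact Or.inr (Or.inl ⟨h1, h2⟩)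
    · exact Or.inl ⟨h1, h2⟩
    · exact Or.inr (Or.inr ⟨h2, h1, h3.symm⟩)
  loopless := by
    constructor
    intro v h
    rcases h with ⟨h1, h2⟩ | ⟨h1, h2⟩ | ⟨h1, h2, h3⟩
    · exact h2 h1
    · exact h2 h1
    · exact G'.irrefl h3

theorem sandwich_delete_universal {V ι : Type*} [Fintype V] {W : ι → Type*}
    [∀ i, Fintype (W i)] (F : ∀ i, SimpleGraph (W i))
    (hnouniv : ∀ i, ¬ ∃ x : W i, _root_.IsUniversal (F i) x)
    (G1 G2 : SimpleGraph V) (h12 : G1 ≤ G2)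
    (u : V) (hu : _root_.IsUniversal G2 u) :
    (∃ G, InSandwich F G1 G2 G) ↔
      (∃ G' : SimpleGraph ({v : V | v ≠ u} : Set V),
        InSandwich F (G1.induce {v : V | v ≠ u}) (G2.induce {v : V | v ≠ u}) G') := by
  constructor
  · rintro ⟨G, hG1, hG2, hfree⟩
    refine ⟨G.induce _, fun a b h => hG1 h, fun a b h => hG2 h, fun i hi => ?_⟩
    exact hfree i ⟨(Embedding.induce _).comp hi.some⟩
  · rintro ⟨G', hG1, hG2, hfree⟩
    refine ⟨extendUniv u G', ?_, ?_, ?_⟩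
    · intro v w h
      by_cases hv : v = u
      · exact Or.inl ⟨hv, fun hw => (G1.ne_of_adj h) (hv.trans hw.symm)⟩
      · by_cases hw : w = u
        · exact Or.inr (Or.inl ⟨hw, hv⟩)
        · exact Or.inr (Or.inr ⟨hv, hw, @hG1 ⟨v, hv⟩ ⟨w, hw⟩ h⟩)
    · intro v w h
      rcases h with ⟨h1, h2⟩ | ⟨h1, h2⟩ | ⟨h1, h2, h3⟩
      · exact h1 ▸ hu w h2
      · exact (h1 ▸ (hu v h2).symm)
      · exact @hG2 ⟨v, h1⟩ ⟨w, h2⟩ h3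
    · rintro i ⟨f⟩
      by_cases hex : ∃ x, f x = u
      · obtain ⟨x, hx⟩ := hex
        refine hnouniv i ⟨x, fun y hy => ?_⟩
        have hfy : f y ≠ u := fun h => hy (f.injective (h.trans hx.symm))
        exact f.map_rel_iff.mp (Or.inl ⟨hx, hfy⟩)
      · push_neg at hex
        refine hfree i ⟨⟨⟨fun x => (⟨f x, hex x⟩ : {v : V | v ≠ u}),
          fun a b h => f.injective (congrArg Subtype.val h)⟩, ?_⟩⟩
        intro a b
        show G'.Adj ⟨f a, hex a⟩ ⟨f b, hex b⟩ ↔ (F i).Adj a b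
        rw [← f.map_rel_iff]
        constructor
        · intro h; exact Or.inr (Or.inr ⟨hex a, hex b, h⟩)
        · rintro (⟨h1, _⟩ | ⟨h1, _⟩ | ⟨_, _, h3⟩)
          · exact absurd h1 (hex a)
          · exact absurd h1 (hex b)
          · exact h3
end

section
/- A finite connected simple graph is paw-free if and only if it is triangle-free or P̄3-free, where P̄3-freeness means that the graph contains no induced subgraph isomorphic to the complement of the path on three vertices (i.e., an edge plus an isolated vertex). -/
open SimpleGraph

/-- The paw: a triangle `0,1,2` with a pendant vertex `3` attached to `2`. -/
def paw : SimpleGraph (Fin 4) := fromEdgeSet {s(0,1), s(0,2), s(1,2), s(2,3)}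

/-- The complement of `P₃`: one edge plus an isolated vertex. -/
def P3bar : SimpleGraph (Fin 3) := fromEdgeSet {s(0,1)}

lemma paw_embed {V : Type*} {G : SimpleGraph V} {a b c t : V}
    (hab : G.Adj a b) (hac : G.Adj a c) (hbc : G.Adj b c)
    (hta : G.Adj t a) (htb : ¬ G.Adj t b) (htc : ¬ G.Adj t c) :
    Nonempty (paw ↪g G) := by
  have htb' : t ≠ b := fun h => htc (h ▸ hbc)
  have htc' : t ≠ c := fun h => htb (h ▸ hbc.symm)
  have hba := hab.symm
  have hca := hac.symm
  have hcb := hbc.symm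
  have hat := hta.symm
  have hbt : ¬ G.Adj b t := fun h => htb h.symm
  have hct : ¬ G.Adj c t := fun h => htc h.symm
  refine ⟨⟨⟨![b, c, a, t], ?_⟩, ?_⟩⟩
  · intro i j hij
    fin_cases i <;> fin_cases j <;>
      simp_all [hab.ne, hac.ne, hbc.ne, hta.ne, hab.ne', hac.ne', hbc.ne', hta.ne']
  · intro i j
    show G.Adj (![b, c, a, t] i) (![b, c, a, t] j) ↔ paw.Adj i j
    fin_cases i <;> fin_cases j <;>
      simp_all [paw, Sym2.eq_iff, fun v => (G.irrefl : ¬G.Adj v v)]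

lemma P3bar_embed {V : Type*} {G : SimpleGraph V} {x y z : V}
    (hxy : G.Adj x y) (hzx : ¬ G.Adj z x) (hzy : ¬ G.Adj z y)
    (hzx' : z ≠ x) (hzy' : z ≠ y) :
    Nonempty (P3bar ↪g G) := by
  have hyx := hxy.symm
  have hxz : ¬ G.Adj x z := fun h => hzx h.symm
  have hyz : ¬ G.Adj y z := fun h => hzy h.symm
  refine ⟨⟨⟨![x, y, z], ?_⟩, ?_⟩⟩
  · intro i j hij
    fin_cases i <;> fin_cases j <;>
      simp_all [hxy.ne, hxy.ne', hzx'.symm, hzy'.symm]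
  · intro i j
    show G.Adj (![x, y, z] i) (![x, y, z] j) ↔ P3bar.Adj i j
    fin_cases i <;> fin_cases j <;>
      simp_all [P3bar, Sym2.eq_iff, fun v => (G.irrefl : ¬G.Adj v v)]

/-- paw-freeness: a vertex adjacent to one vertex of a triangle is adjacent to another. -/
lemma pawA {V : Type*} {G : SimpleGraph V} (hpaw : InducedFree paw G) {a b c t : V}
    (hab : G.Adj a b) (hac : G.Adj a c) (hbc : G.Adj b c) (hta : G.Adj t a) :
    G.Adj t b ∨ G.Adj t c := by
  by_contra h
  push_neg at h
  exact hpaw (paw_embed hab hac hbc hta h.1 h.2)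

/-- every vertex reachable from a triangle vertex is in a triangle -/
lemma inTri_walk {V : Type*} {G : SimpleGraph V} (hpaw : InducedFree paw G) {u v : V}
    (p : G.Walk u v) (h : ∃ a b, G.Adj u a ∧ G.Adj u b ∧ G.Adj a b) :
    ∃ a b, G.Adj v a ∧ G.Adj v b ∧ G.Adj a b := by
  induction p with
  | nil => exact h
  | @cons u w v huw q ih =>
    apply ih
    obtain ⟨a, b, hua, hub, hab⟩ := h
    rcases pawA hpaw hua hub hab huw.symm with hwa | hwb
    · exact ⟨a, u, hwa, huw.symm, hua.symm⟩
    · exact ⟨b, u, hwb, huw.symm, hub.symm⟩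

theorem olariu_paw_free {V : Type*} [Fintype V] (G : SimpleGraph V)
    (hconn : G.Connected) :
    InducedFree paw G ↔ (G.CliqueFree 3 ∨ InducedFree P3bar G) := by
  classical
  have hp01 : paw.Adj 0 1 := by simp [paw, Sym2.eq_iff]
  have hp02 : paw.Adj 0 2 := by simp [paw, Sym2.eq_iff]
  have hp12 : paw.Adj 1 2 := by simp [paw, Sym2.eq_iff]
  have hp30 : ¬ paw.Adj 3 0 := by simp [paw, Sym2.eq_iff]
  have hp31 : ¬ paw.Adj 3 1 := by simp [paw, Sym2.eq_iff]
  constructor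
  · intro hpaw
    by_cases hcf : G.CliqueFree 3
    · exact Or.inl hcf
    · right
      rintro ⟨f⟩
      -- a triangle exists
      rw [CliqueFree] at hcf
      push_neg at hcf
      obtain ⟨s, hs⟩ := hcf
      rw [is3Clique_iff] at hs
      obtain ⟨t1, t2, t3, h12, h13, h23, -⟩ := hs
      -- a bad triple exists
      have hx0y0 : G.Adj (f 0) (f 1) := f.map_adj_iff.mpr (by simp [P3bar, Sym2.eq_iff])
      have hz0x0 : ¬ G.Adj (f 2) (f 0) := fun h => (by simp [P3bar, Sym2.eq_iff] : ¬ P3bar.Adj 2 0) (f.map_adj_iff.mp h)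
      have hz0y0 : ¬ G.Adj (f 2) (f 1) := fun h => (by simp [P3bar, Sym2.eq_iff] : ¬ P3bar.Adj 2 1) (f.map_adj_iff.mp h)
      set Q : ℕ → Prop := fun n => ∃ x y z, G.Adj x y ∧ ¬ G.Adj z x ∧ ¬ G.Adj z y ∧
        z ≠ x ∧ z ≠ y ∧ ∃ p : G.Walk z x, p.length = n with hQdef
      have hex : ∃ n, Q n := by
        obtain ⟨p⟩ := hconn.preconnected (f 2) (f 0)
        exact ⟨p.length, f 0, f 1, f 2, hx0y0, hz0x0, hz0y0,
          f.injective.ne (by decide), f.injective.ne (by decide), p, rfl⟩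
      obtain ⟨x, y, z, hxy, hzx, hzy, hzx', hzy', p, hp⟩ := Nat.find_spec hex
      have hmin : ∀ m, m < Nat.find hex → ¬ Q m := fun m hm => Nat.find_min hex hm
      -- decompose a shortest-witness walk from the x end
      obtain ⟨w, hxw, r, hr⟩ := (p.reverse).exists_eq_cons_of_ne (Ne.symm hzx')
      have hwz : w ≠ z := by
        rintro rfl
        exact hzx hxw.symm
      obtain ⟨u, hwu, s, hs'⟩ := r.exists_eq_cons_of_ne hwz
      have hlen : s.length + 2 = Nat.find hex := by
        have := p.length_reverse
        rw [hr, hs'] at this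
        simp at this
        omega
      set n := s.length with hn
      -- u is not adjacent to x nor y
      have huxF : ¬ G.Adj u x := by
        intro h
        exact hmin (n + 1) (by omega) ⟨x, y, z, hxy, hzx, hzy, hzx', hzy',
          s.reverse.concat h, by simp [hn]⟩
      have huyF : ¬ G.Adj u y := by
        intro h
        exact hmin (n + 1) (by omega) ⟨y, x, z, hxy.symm, hzy, hzx, hzy', hzx',
          s.reverse.concat h, by simp [hn]⟩
      have hwy : ¬ G.Adj w y := by
        intro h
        rcases pawA hpaw hxw.symm h hxy hwu.symm with h' | h'
        · exact huxF h'
        · exact huyF h'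
      -- x is in a triangle
      obtain ⟨pw⟩ := hconn.preconnected t1 x
      obtain ⟨a, b, hxa, hxb, hab⟩ := inTri_walk hpaw pw ⟨t2, t3, h12, h13, h23⟩
      have key : ∀ a b : V, G.Adj x a → G.Adj x b → G.Adj a b → G.Adj w a → False := by
        intro a b hxa hxb hab hwa
        have hya : G.Adj y a := by
          rcases pawA hpaw hxw hxa hwa hxy.symm with h | h
          · exact absurd h.symm hwy
          · exact h
        have hza : ¬ G.Adj z a := by
          intro h
          rcases pawA hpaw hxa.symm hya.symm hxy h with h' | h'
          · exact hzx h'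
          · exact hzy h'
        have hza' : z ≠ a := by
          rintro rfl
          exact hzy hya.symm
        by_cases hua : G.Adj u a
        · exact hmin (n + 1) (by omega) ⟨a, y, z, hya.symm, hza, hzy, hza', hzy',
            s.reverse.concat hua, by simp [hn]⟩
        · rcases pawA hpaw hxw.symm hwa hxa hwu.symm with h | h
          · exact huxF h
          · exact hua h
      rcases pawA hpaw hxa hxb hab hxw.symm with h | h
      · exact key a b hxa hxb hab h
      · exact key b a hxb hxa hab.symm h
  · rintro (hcf | hP3) ⟨f⟩
    · exact hcf _ (is3Clique_triple_iff.mpr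
        ⟨f.map_adj_iff.mpr hp01, f.map_adj_iff.mpr hp02, f.map_adj_iff.mpr hp12⟩)
    · exact hP3 (P3bar_embed (f.map_adj_iff.mpr hp01)
        (fun h => hp30 (f.map_adj_iff.mp h)) (fun h => hp31 (f.map_adj_iff.mp h))
        (f.injective.ne (by decide)) (f.injective.ne (by decide)))
end

section
/- If G is a finite connected simple graph that is {paw, claw}-free and contains a triangle, then the complement of G has maximum degree at most one; equivalently, G is a complete multipartite graph in which every partite set has at most two vertices. -/
open SimpleGraph

/-- The claw `K_{1,3}`: center `0` with leaves `1,2,3`. -/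
def claw : SimpleGraph (Fin 4) := fromEdgeSet {s(0,1), s(0,2), s(0,3)}

/-- The maximum degree of `G` is at most one: every vertex has at most one neighbor. -/
def MaxDegreeLEOne {V : Type*} (G : SimpleGraph V) : Prop :=
  ∀ v a b : V, G.Adj v a → G.Adj v b → a = b

lemma paw_of {V : Type*} {G : SimpleGraph V} (hpaw : InducedFree paw G)
    {x y z u : V} (hxy : G.Adj x y) (hxz : G.Adj x z) (hyz : G.Adj y z)
    (hzu : G.Adj z u) (hux : ¬ G.Adj u x) (huy : ¬ G.Adj u y) : False := by
  have h1 : x ≠ y := hxy.ne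
  have h2 : x ≠ z := hxz.ne
  have h3 : y ≠ z := hyz.ne
  have h4 : u ≠ x := by rintro rfl; exact huy hxy
  have h5 : u ≠ y := by rintro rfl; exact hux hxy.symm
  have h6 : u ≠ z := fun h => (hzu.ne' h).elim
  have hxu : ¬ G.Adj x u := fun h => hux h.symm
  have hyu : ¬ G.Adj y u := fun h => huy h.symm
  apply hpaw
  refine ⟨⟨⟨![x, y, z, u], ?_⟩, ?_⟩⟩
  · intro a b hab
    fin_cases a <;> fin_cases b <;> simp_all
  · intro a b
    change G.Adj (![x, y, z, u] a) (![x, y, z, u] b) ↔ paw.Adj a b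
    fin_cases a <;> fin_cases b <;>
      simp [paw, fromEdgeSet_adj, Function.Embedding.coeFn_mk, hxy, hxz, hyz, hzu, hxy.symm, hxz.symm, hyz.symm, hzu.symm,
        hux, huy, hxu, hyu, G.irrefl, h1, h2, h3, h4, h5, h6,
        h1.symm, h2.symm, h3.symm, h4.symm, h5.symm, h6.symm]

lemma claw_of {V : Type*} {G : SimpleGraph V} (hclaw : InducedFree claw G)
    {w v a b : V} (h1 : G.Adj w v) (h2 : G.Adj w a) (h3 : G.Adj w b)
    (nva : ¬ G.Adj v a) (nvb : ¬ G.Adj v b) (nab : ¬ G.Adj a b)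
    (hva : v ≠ a) (hvb : v ≠ b) (hab : a ≠ b) : False := by
  have e1 : w ≠ v := h1.ne
  have e2 : w ≠ a := h2.ne
  have e3 : w ≠ b := h3.ne
  have nav : ¬ G.Adj a v := fun h => nva h.symm
  have nbv : ¬ G.Adj b v := fun h => nvb h.symm
  have nba : ¬ G.Adj b a := fun h => nab h.symm
  apply hclaw
  refine ⟨⟨⟨![w, v, a, b], ?_⟩, ?_⟩⟩
  · intro i j hij
    fin_cases i <;> fin_cases j <;> simp_all
  · intro i j
    change G.Adj (![w, v, a, b] i) (![w, v, a, b] j) ↔ claw.Adj i j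
    fin_cases i <;> fin_cases j <;>
      simp [claw, fromEdgeSet_adj, Function.Embedding.coeFn_mk, h1, h2, h3, h1.symm, h2.symm, h3.symm, nva, nvb, nab,
        nav, nbv, nba, G.irrefl, e1, e2, e3, e1.symm, e2.symm, e3.symm,
        hva, hvb, hab, hva.symm, hvb.symm, hab.symm]

lemma walk_ind {V : Type*} {G : SimpleGraph V} (P : V → Prop)
    (hP : ∀ u v, G.Adj u v → P u → P v) : ∀ {x y : V}, G.Walk x y → P x → P y := by
  intro x y p
  induction p with
  | nil => exact id
  | cons h _ ih => exact fun hx => ih (hP _ _ h hx)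

/-- If `x,y,z` is a triangle and `u` is adjacent to `x`, then `u` is adjacent to `y` or `z`. -/
lemma two {V : Type*} {G : SimpleGraph V} (hpaw : InducedFree paw G) {x y z u : V}
    (hxy : G.Adj x y) (hxz : G.Adj x z) (hyz : G.Adj y z) (hux : G.Adj u x) :
    G.Adj u y ∨ G.Adj u z := by
  by_contra h
  push_neg at h
  exact paw_of hpaw hyz hxy.symm hxz.symm hux.symm h.1 h.2

lemma every_in_triangle {V : Type*} {G : SimpleGraph V} (hpaw : InducedFree paw G)
    (hconn : G.Connected) (htriangle : ¬ G.CliqueFree 3) (v : V) :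
    ∃ x y, G.Adj v x ∧ G.Adj v y ∧ G.Adj x y := by
  classical
  simp only [CliqueFree, not_forall, not_not] at htriangle
  obtain ⟨s, hs⟩ := htriangle
  rw [is3Clique_iff] at hs
  obtain ⟨a, b, c, hab, hac, hbc, -⟩ := hs
  obtain ⟨p⟩ := hconn.preconnected a v
  refine walk_ind (fun w => ∃ x y, G.Adj w x ∧ G.Adj w y ∧ G.Adj x y) ?_ p ⟨b, c, hab, hac, hbc⟩
  rintro w u hwu ⟨p, q, hwp, hwq, hpq⟩
  rcases two hpaw hwp hwq hpq hwu.symm with h | h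
  · exact ⟨w, p, hwu.symm, h, hwp⟩
  · exact ⟨w, q, hwu.symm, h, hwq⟩

lemma qstep {V : Type*} {G : SimpleGraph V} (hpaw : InducedFree paw G) {a b w u : V}
    (hab : G.Adj a b) (hwu : G.Adj w u) (nwa : ¬ G.Adj w a)
    (nwb : ¬ G.Adj w b) (hua : G.Adj u a) (hub : G.Adj u b) : False :=
  paw_of hpaw hab hua.symm hub.symm hwu.symm nwa nwb

/-- Key lemma: no vertex is nonadjacent to both endpoints of an edge. -/
lemma key {V : Type*} {G : SimpleGraph V} (hpaw : InducedFree paw G)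
    (hconn : G.Connected) (htriangle : ¬ G.CliqueFree 3)
    {x y z : V} (hxy : G.Adj x y) (nzx : ¬ G.Adj z x) (nzy : ¬ G.Adj z y) : False := by
  obtain ⟨p, q, hxp, hxq, hpq⟩ := every_in_triangle hpaw hconn htriangle x
  have ht : ∃ t, G.Adj x t ∧ G.Adj y t := by
    rcases two hpaw hxp hxq hpq hxy.symm with h | h
    · exact ⟨p, hxp, h⟩
    · exact ⟨q, hxq, h⟩
  obtain ⟨t, hxt, hyt⟩ := ht
  have nzt : ¬ G.Adj z t := by
    intro hzt
    rcases two hpaw hxt.symm hyt.symm hxy hzt with h | h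
    · exact nzx h
    · exact nzy h
  obtain ⟨pw⟩ := hconn.preconnected z x
  have Qx : ¬ G.Adj x x ∧ ¬ G.Adj x y ∧ ¬ G.Adj x t := by
    refine walk_ind (fun w => ¬ G.Adj w x ∧ ¬ G.Adj w y ∧ ¬ G.Adj w t) ?_ pw ⟨nzx, nzy, nzt⟩
    rintro w u hwu ⟨nwx, nwy, nwt⟩
    refine ⟨?_, ?_, ?_⟩
    · intro hux
      rcases two hpaw hxy hxt hyt hux with h | h
      · exact qstep hpaw hxy hwu nwx nwy hux h
      · exact qstep hpaw hxt hwu nwx nwt hux h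
    · intro huy
      rcases two hpaw hxy.symm hyt hxt huy with h | h
      · exact qstep hpaw hxy.symm hwu nwy nwx huy h
      · exact qstep hpaw hyt hwu nwy nwt huy h
    · intro hut
      rcases two hpaw hxt.symm hyt.symm hxy hut with h | h
      · exact qstep hpaw hxt.symm hwu nwt nwx hut h
      · exact qstep hpaw hyt.symm hwu nwt nwy hut h
  exact Qx.2.1 hxy

theorem paw_claw_free_with_triangle {V : Type*} [Fintype V] (G : SimpleGraph V)
    (hconn : G.Connected) (hpaw : InducedFree paw G) (hclaw : InducedFree claw G)
    (htriangle : ¬ G.CliqueFree 3) :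
    MaxDegreeLEOne Gᶜ := by
  intro v a b hva hvb
  rw [compl_adj] at hva hvb
  obtain ⟨hne_va, nva⟩ := hva
  obtain ⟨hne_vb, nvb⟩ := hvb
  by_contra hab
  have nab : ¬ G.Adj a b := fun h => key hpaw hconn htriangle h nva nvb
  obtain ⟨p, q, hvp, hvq, hpq⟩ := every_in_triangle hpaw hconn htriangle v
  have hpa : G.Adj p a := by
    by_contra h
    exact key hpaw hconn htriangle hvp (fun h' => nva h'.symm) (fun h' => h h'.symm)
  have hpb : G.Adj p b := by
    by_contra h
    exact key hpaw hconn htriangle hvp (fun h' => nvb h'.symm) (fun h' => h h'.symm)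
  exact claw_of hclaw hvp.symm hpa hpb nva nvb nab hne_va hne_vb hab
end

section
/- If G is a finite simple graph that is {paw, K1 ∪ K3}-free and contains a triangle, then G is connected and P̄3-free, i.e., G contains no induced subgraph isomorphic to the complement of the path on three vertices. -/
open SimpleGraph

/-- `K1 ∪ K3`: a triangle `1,2,3` together with the isolated vertex `0`
(the complement of the claw). -/
def K1uK3 : SimpleGraph (Fin 4) := fromEdgeSet {s(1,2), s(1,3), s(2,3)}

section Aux
variable {V : Type*} {G : SimpleGraph V}

/-- A triangle plus a vertex adjacent to exactly one of its vertices gives a paw. -/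
lemma paw_lemma (hpaw : InducedFree paw G) {a b c v : V}
    (hab : G.Adj a b) (hac : G.Adj a c) (hbc : G.Adj b c)
    (hvc : G.Adj v c) (hva : ¬ G.Adj v a) (hvb : ¬ G.Adj v b) : False := by
  have h1 : v ≠ a := by rintro rfl; exact hvb hab
  have h2 : v ≠ b := by rintro rfl; exact hva hab.symm
  have hav : ¬ G.Adj a v := fun h => hva h.symm
  have hbv : ¬ G.Adj b v := fun h => hvb h.symm
  apply hpaw
  refine ⟨⟨⟨![a,b,c,v], ?_⟩, ?_⟩⟩
  · intro i j
    have := hab.ne; have := hac.ne; have := hbc.ne; have := hvc.ne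
    fin_cases i <;> fin_cases j <;> simp_all <;> intro h <;> simp_all [eq_comm]
  · intro i j
    fin_cases i <;> fin_cases j <;>
      simp_all [DFunLike.coe, paw, hab.symm, hac.symm, hbc.symm, hvc.symm, G.irrefl]

/-- A triangle plus a vertex adjacent to none of its vertices gives `K1 ∪ K3`. -/
lemma k1uk3_lemma (hK : InducedFree K1uK3 G) {a b c v : V}
    (hab : G.Adj a b) (hac : G.Adj a c) (hbc : G.Adj b c)
    (hva : ¬ G.Adj v a) (hvb : ¬ G.Adj v b) (hvc : ¬ G.Adj v c)
    (h1 : v ≠ a) (h2 : v ≠ b) (h3 : v ≠ c) : False := by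
  have hav : ¬ G.Adj a v := fun h => hva h.symm
  have hbv : ¬ G.Adj b v := fun h => hvb h.symm
  have hcv : ¬ G.Adj c v := fun h => hvc h.symm
  apply hK
  refine ⟨⟨⟨![v,a,b,c], ?_⟩, ?_⟩⟩
  · intro i j
    have := hab.ne; have := hac.ne; have := hbc.ne
    fin_cases i <;> fin_cases j <;> simp_all <;> intro h <;> simp_all [eq_comm]
  · intro i j
    fin_cases i <;> fin_cases j <;>
      simp_all [DFunLike.coe, K1uK3, hab.symm, hac.symm, hbc.symm, G.irrefl]

/-- Every vertex is adjacent to at least two vertices of any triangle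
(trivially true for triangle vertices themselves). -/
lemma two_of_three (hpaw : InducedFree paw G) (hK : InducedFree K1uK3 G) {a b c : V}
    (hab : G.Adj a b) (hac : G.Adj a c) (hbc : G.Adj b c) (v : V) :
    (G.Adj v a ∧ G.Adj v b) ∨ (G.Adj v a ∧ G.Adj v c) ∨ (G.Adj v b ∧ G.Adj v c) := by
  by_cases e1 : v = a
  · subst e1; exact Or.inr (Or.inr ⟨hab, hac⟩)
  by_cases e2 : v = b
  · subst e2; exact Or.inr (Or.inl ⟨hab.symm, hbc⟩)
  by_cases e3 : v = c
  · subst e3; exact Or.inl ⟨hac.symm, hbc.symm⟩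
  by_cases h1 : G.Adj v a <;> by_cases h2 : G.Adj v b <;> by_cases h3 : G.Adj v c
  · exact Or.inl ⟨h1, h2⟩
  · exact Or.inl ⟨h1, h2⟩
  · exact Or.inr (Or.inl ⟨h1, h3⟩)
  · exact absurd (paw_lemma hpaw hbc hab.symm hac.symm h1 h2 h3) id
  · exact Or.inr (Or.inr ⟨h2, h3⟩)
  · exact absurd (paw_lemma hpaw hac hab hbc.symm h2 h1 h3) id
  · exact absurd (paw_lemma hpaw hab hac hbc h3 h1 h2) id
  · exact absurd (k1uk3_lemma hK hab hac hbc h1 h2 h3 e1 e2 e3) id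

/-- Given a triangle, any two vertices have a common neighbour. -/
lemma common_nbr (hpaw : InducedFree paw G) (hK : InducedFree K1uK3 G) {a b c : V}
    (hab : G.Adj a b) (hac : G.Adj a c) (hbc : G.Adj b c) (x y : V) :
    ∃ w, G.Adj x w ∧ G.Adj y w := by
  have hx := two_of_three hpaw hK hab hac hbc x
  have hy := two_of_three hpaw hK hab hac hbc y
  rcases hx with ⟨p,q⟩|⟨p,q⟩|⟨p,q⟩ <;> rcases hy with ⟨r,s⟩|⟨r,s⟩|⟨r,s⟩ <;>
    first
      | exact ⟨a, p, r⟩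
      | exact ⟨b, q, s⟩
      | exact ⟨c, q, s⟩
      | exact ⟨b, q, r⟩
      | exact ⟨b, p, s⟩

end Aux

theorem paw_coclaw_free_with_triangle {V : Type*} [Fintype V] (G : SimpleGraph V)
    (hpaw : InducedFree paw G) (hK1uK3 : InducedFree K1uK3 G)
    (htriangle : ¬ G.CliqueFree 3) :
    G.Connected ∧ InducedFree P3bar G := by
  classical
  rw [CliqueFree] at htriangle
  push_neg at htriangle
  obtain ⟨t, ht⟩ := htriangle
  obtain ⟨a, b, c, hab, hac, hbc, rfl⟩ := Finset.card_eq_three.mp ht.card_eq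
  have hab' : G.Adj a b := ht.isClique (by simp) (by simp) hab
  have hac' : G.Adj a c := ht.isClique (by simp) (by simp) hac
  have hbc' : G.Adj b c := ht.isClique (by simp) (by simp) hbc
  constructor
  · have : Nonempty V := ⟨a⟩
    refine ⟨fun x y => ?_⟩
    obtain ⟨w, hxw, hyw⟩ := common_nbr hpaw hK1uK3 hab' hac' hbc' x y
    exact hxw.reachable.trans hyw.reachable.symm
  · rintro ⟨f⟩
    have hxy : G.Adj (f 0) (f 1) := f.map_rel_iff.mpr (by simp [P3bar])
    have hzx : ¬ G.Adj (f 2) (f 0) := fun h =>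
      (by simp [P3bar] : ¬ P3bar.Adj 2 0) (f.map_rel_iff.mp h)
    have hzy : ¬ G.Adj (f 2) (f 1) := fun h =>
      (by simp [P3bar] : ¬ P3bar.Adj 2 1) (f.map_rel_iff.mp h)
    obtain ⟨w, hxw, hyw⟩ := common_nbr hpaw hK1uK3 hab' hac' hbc' (f 0) (f 1)
    by_cases hzw : G.Adj (f 2) w
    · exact paw_lemma hpaw hxy hxw hyw hzw hzx hzy
    · have h3 : f 2 ≠ w := fun h => hzx (h ▸ hxw.symm)
      exact k1uk3_lemma hK1uK3 hxy hxw hyw hzx hzy hzw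
        (fun h => by simpa using f.injective h)
        (fun h => by simpa using f.injective h) h3
end

section
/- A finite connected simple graph G that contains a triangle is {paw, K4}-free if and only if G is a complete multipartite graph with at most three partite sets; that is, if and only if the vertex set of G can be partitioned into at most three independent sets such that every two vertices in different parts are adjacent. -/
open SimpleGraph

/-- The complete graph on four vertices. -/
def K4 : SimpleGraph (Fin 4) := ⊤

/-- `G` is a complete multipartite graph with at most three partite sets:
the vertices can be colored with three colors so that two vertices are
adjacent exactly when they receive different colors. -/
def IsCompleteMultipartiteLE3 {V : Type*} (G : SimpleGraph V) : Prop :=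
  ∃ c : V → Fin 3, ∀ u v : V, G.Adj u v ↔ c u ≠ c v

lemma pawlem {V : Type*} {G : SimpleGraph V} (hfree : InducedFree paw G)
    {x y z v : V} (hxy : G.Adj x y) (hxz : G.Adj x z) (hyz : G.Adj y z)
    (hvx : G.Adj v x) (hvy : ¬ G.Adj v y) : G.Adj v z := by
  by_contra hvz
  have hvney : v ≠ y := fun h => hvz (h ▸ hyz)
  have hvnez : v ≠ z := fun h => hvy (h ▸ hyz.symm)
  apply hfree
  refine ⟨⟨⟨![y, z, x, v], ?_⟩, ?_⟩⟩
  · intro i j h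
    have h1 := hxy.ne
    have h2 := hxz.ne
    have h3 := hyz.ne
    have h4 := hvx.ne
    fin_cases i <;> fin_cases j <;> simp_all
  · intro i j
    change G.Adj (![y, z, x, v] i) (![y, z, x, v] j) ↔ _
    have hyv : ¬ G.Adj y v := fun h => hvy h.symm
    have hzv : ¬ G.Adj z v := fun h => hvz h.symm
    fin_cases i <;> fin_cases j <;>
      simp [paw, hxy, hxz, hyz, hvx, hvy, hvz, hyv, hzv, hxy.symm, hxz.symm, hyz.symm, hvx.symm]

lemma k4lem {V : Type*} {G : SimpleGraph V} (hfree : InducedFree K4 G)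
    {x y z w : V} (h1 : G.Adj x y) (h2 : G.Adj x z) (h3 : G.Adj x w)
    (h4 : G.Adj y z) (h5 : G.Adj y w) (h6 : G.Adj z w) : False := by
  apply hfree
  refine ⟨⟨⟨![x, y, z, w], ?_⟩, ?_⟩⟩
  · intro i j h
    have := h1.ne; have := h2.ne; have := h3.ne; have := h4.ne; have := h5.ne; have := h6.ne
    fin_cases i <;> fin_cases j <;> simp_all
  · intro i j
    change G.Adj (![x, y, z, w] i) (![x, y, z, w] j) ↔ _
    fin_cases i <;> fin_cases j <;>
      simp [K4, h1, h2, h3, h4, h5, h6, h1.symm, h2.symm, h3.symm, h4.symm, h5.symm, h6.symm]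

theorem paw_K4_free_iff_complete_tripartite {V : Type*} [Fintype V]
    (G : SimpleGraph V) (hconn : G.Connected) (htriangle : ¬ G.CliqueFree 3) :
    (InducedFree paw G ∧ InducedFree K4 G) ↔ IsCompleteMultipartiteLE3 G := by
  classical
  constructor
  · rintro ⟨hpaw, hk4⟩
    rw [CliqueFree] at htriangle
    push_neg at htriangle
    obtain ⟨t, ht⟩ := htriangle
    rw [is3Clique_iff] at ht
    obtain ⟨a, b, c, hab, hac, hbc, -⟩ := ht
    set P : V → Prop := fun v =>
      (G.Adj v a ∧ G.Adj v b ∧ ¬G.Adj v c) ∨ (G.Adj v a ∧ ¬G.Adj v b ∧ G.Adj v c) ∨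
        (¬G.Adj v a ∧ G.Adj v b ∧ G.Adj v c) with hPdef
    have step : ∀ u v, P u → G.Adj u v → P v := by
      intro u v hu huv
      rcases hu with ⟨h1, h2, h3⟩ | ⟨h1, h2, h3⟩ | ⟨h1, h2, h3⟩
      · by_cases hva : G.Adj v a <;> by_cases hvb : G.Adj v b
        · exact (k4lem hk4 h1 h2 huv hab hva.symm hvb.symm).elim
        · exact Or.inr (Or.inl ⟨hva, hvb, pawlem hpaw hab hac hbc hva hvb⟩)
        · exact Or.inr (Or.inr ⟨hva, hvb, pawlem hpaw hab.symm hbc hac hvb hva⟩)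
        · exact (hvb (pawlem hpaw h1 h2 hab huv.symm hva)).elim
      · by_cases hva : G.Adj v a <;> by_cases hvc : G.Adj v c
        · exact (k4lem hk4 h1 h3 huv hac hva.symm hvc.symm).elim
        · exact Or.inl ⟨hva, pawlem hpaw hac hab hbc.symm hva hvc, hvc⟩
        · exact Or.inr (Or.inr ⟨hva, pawlem hpaw hac.symm hbc.symm hab hvc hva, hvc⟩)
        · exact (hvc (pawlem hpaw h1 h3 hac huv.symm hva)).elim
      · by_cases hvb : G.Adj v b <;> by_cases hvc : G.Adj v c
        · exact (k4lem hk4 h2 h3 huv hbc hvb.symm hvc.symm).elim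
        · exact Or.inl ⟨pawlem hpaw hbc hab.symm hac.symm hvb hvc, hvb, hvc⟩
        · exact Or.inr (Or.inl ⟨pawlem hpaw hbc.symm hac.symm hab.symm hvc hvb, hvb, hvc⟩)
        · exact (hvc (pawlem hpaw h2 h3 hbc huv.symm hvb)).elim
    have key : ∀ {x y : V}, G.Walk x y → P x → P y := by
      intro x y w
      induction w with
      | nil => exact id
      | cons h p ih => intro hx; exact ih (step _ _ hx h)
    have hPa : P a := Or.inr (Or.inr ⟨G.loopless.irrefl a, hab, hac⟩)
    have hP : ∀ v, P v := by
      intro v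
      obtain ⟨w⟩ := hconn.preconnected a v
      exact key w hPa
    set col : V → Fin 3 := fun v => if ¬ G.Adj v a then 0 else if ¬ G.Adj v b then 1 else 2
      with hcol
    have spec : ∀ v, (col v = 0 ∧ ¬G.Adj v a ∧ G.Adj v b ∧ G.Adj v c) ∨
        (col v = 1 ∧ G.Adj v a ∧ ¬G.Adj v b ∧ G.Adj v c) ∨
        (col v = 2 ∧ G.Adj v a ∧ G.Adj v b ∧ ¬G.Adj v c) := by
      intro v
      rcases hP v with ⟨h1, h2, h3⟩ | ⟨h1, h2, h3⟩ | ⟨h1, h2, h3⟩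
      · exact Or.inr (Or.inr ⟨by simp [hcol, h1, h2], h1, h2, h3⟩)
      · exact Or.inr (Or.inl ⟨by simp [hcol, h1, h2], h1, h2, h3⟩)
      · exact Or.inl ⟨by simp [hcol, h1], h1, h2, h3⟩
    refine ⟨col, fun u v => ⟨?_, ?_⟩⟩
    · intro huv heq
      rcases spec u with ⟨e1, hu1, hu2, hu3⟩ | ⟨e1, hu1, hu2, hu3⟩ | ⟨e1, hu1, hu2, hu3⟩ <;>
        rcases spec v with ⟨e2, hv1, hv2, hv3⟩ | ⟨e2, hv1, hv2, hv3⟩ | ⟨e2, hv1, hv2, hv3⟩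
      · exact k4lem hk4 hu2 hu3 huv hbc hv2.symm hv3.symm
      · rw [e1, e2] at heq; exact absurd heq (by decide)
      · rw [e1, e2] at heq; exact absurd heq (by decide)
      · rw [e1, e2] at heq; exact absurd heq (by decide)
      · exact k4lem hk4 hu1 hu3 huv hac hv1.symm hv3.symm
      · rw [e1, e2] at heq; exact absurd heq (by decide)
      · rw [e1, e2] at heq; exact absurd heq (by decide)
      · rw [e1, e2] at heq; exact absurd heq (by decide)
      · exact k4lem hk4 hu1 hu2 huv hab hv1.symm hv2.symm
    · intro hne
      rcases spec u with ⟨e1, hu1, hu2, hu3⟩ | ⟨e1, hu1, hu2, hu3⟩ | ⟨e1, hu1, hu2, hu3⟩ <;>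
        rcases spec v with ⟨e2, hv1, hv2, hv3⟩ | ⟨e2, hv1, hv2, hv3⟩ | ⟨e2, hv1, hv2, hv3⟩
      · exact absurd (e1.trans e2.symm) hne
      · exact (pawlem hpaw hbc.symm hu3.symm hu2.symm hv3 hv2).symm
      · exact (pawlem hpaw hbc hu2.symm hu3.symm hv2 hv3).symm
      · exact (pawlem hpaw hac.symm hu3.symm hu1.symm hv3 hv1).symm
      · exact absurd (e1.trans e2.symm) hne
      · exact (pawlem hpaw hac hu1.symm hu3.symm hv1 hv3).symm
      · exact (pawlem hpaw hab.symm hu2.symm hu1.symm hv2 hv1).symm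
      · exact (pawlem hpaw hab hu1.symm hu2.symm hv1 hv2).symm
      · exact absurd (e1.trans e2.symm) hne
  · rintro ⟨c, hc⟩
    constructor
    · rintro ⟨f⟩
      have key : ∀ i j : Fin 4, G.Adj (f i) (f j) ↔ paw.Adj i j := fun i j => f.map_rel_iff
      have h01 : c (f 0) ≠ c (f 1) := (hc _ _).mp ((key 0 1).mpr (by simp [paw]))
      have h03 : c (f 0) = c (f 3) := by
        by_contra hne
        have h := (key 0 3).mp ((hc _ _).mpr hne)
        simp [paw] at h
      have h13 : c (f 1) = c (f 3) := by
        by_contra hne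
        have h := (key 1 3).mp ((hc _ _).mpr hne)
        simp [paw] at h
      exact h01 (h03.trans h13.symm)
    · rintro ⟨f⟩
      have key : ∀ i j : Fin 4, i ≠ j → (c (f i)).val ≠ (c (f j)).val := by
        intro i j h hh
        have : G.Adj (f i) (f j) := f.map_rel_iff.mpr (by simpa [K4] using h)
        exact ((hc _ _).mp this) (Fin.ext hh)
      have l0 := (c (f 0)).isLt
      have l1 := (c (f 1)).isLt
      have l2 := (c (f 2)).isLt
      have l3 := (c (f 3)).isLt
      have d01 := key 0 1 (by decide)
      have d02 := key 0 2 (by decide)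
      have d03 := key 0 3 (by decide)
      have d12 := key 1 2 (by decide)
      have d13 := key 1 3 (by decide)
      have d23 := key 2 3 (by decide)
      omega
end
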